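/- Let m > n > 0, c > 0, and let w : [0,∞) → [0,∞) be continuous nondecreasing with w(x) > 0 for x > 0 such that Ψ(x) = ∫_1^x ds/w(s^{1/(m−n)}) satisfies lim_{x→∞} Ψ(x) = ∞. Then under the hypotheses of the previous corollary (Sun's Theorem 2.2 setting), the bound u(t) ≤ [Ψ⁻¹(Ψ(c) + ∫_0^{α(t)} f(s) ds + ∫_0^t g(s) ds)]^{1/(m−n)} holds for all t ∈ [0,∞). -/

import Mathlib

open Set Filter intervalIntegral
open Topology

/-- A primitive of a nonnegative continuous function is monotone. -/
lemma aux_primitive_mono {F : ℝ → ℝ} (hF : Continuous F) (hF0 : ∀ s, 0 ≤ F s)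
    {a b : ℝ} (hab : a ≤ b) :
    (∫ s in (0:ℝ)..a, F s) ≤ ∫ s in (0:ℝ)..b, F s := by
  rw [← intervalIntegral.integral_add_adjacent_intervals (hF.intervalIntegrable 0 a)
    (hF.intervalIntegrable a b)]
  have h : 0 ≤ ∫ s in a..b, F s :=
    intervalIntegral.integral_nonneg hab fun x _ => hF0 x
  linarith

/-- If a function is monotone on `Ici 0` and has a derivative at an interior point,
the derivative is nonnegative. -/
lemma aux_deriv_nonneg_of_monotoneOn {α : ℝ → ℝ} (hmono : MonotoneOn α (Ici 0))
    {t a : ℝ} (ht : 0 < t) (h : HasDerivAt α a t) : 0 ≤ a := by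
  have h' : HasDerivWithinAt α a (Ioi t) t := h.hasDerivWithinAt
  rw [hasDerivWithinAt_iff_tendsto_slope] at h'
  have hs : Ioi t \ {t} = Ioi t := diff_singleton_eq_self (fun hmem => lt_irrefl t hmem)
  rw [hs] at h'
  refine ge_of_tendsto h' ?_
  filter_upwards [self_mem_nhdsWithin] with y hy
  have hty : t < y := hy
  have h1 : α t ≤ α y := hmono ht.le (ht.le.trans hty.le) hty.le
  have h2 : (0:ℝ) < y - t := by linarith
  simp only [slope_def_field]
  rw [div_eq_mul_inv]
  exact mul_nonneg (by linarith) (inv_nonneg.2 h2.le)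

set_option maxHeartbeats 1000000 in
/-- Remark after Sun's Theorem 2.2: if `Ψ(x) → ∞` as `x → ∞`, then the
estimate `u t ≤ [Ψ⁻¹(Ψ(c) + ∫₀^{α t} f + ∫₀^t g)]^{1/(m-n)}` holds for all
`t ≥ 0` (expressed via the witness `y = Ψ⁻¹(…)`). -/
theorem sun_thm22_global (m n c : ℝ) (hmn : n < m) (hn : 0 < n) (hc : 0 < c)
    (u α f g w Ψ : ℝ → ℝ)
    (hu_cont : ContinuousOn u (Ici 0)) (hu_nonneg : ∀ t ≥ (0:ℝ), 0 ≤ u t)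
    (hα_C1 : ContDiffOn ℝ 1 α (Ici 0)) (hα_mono : MonotoneOn α (Ici 0))
    (hα_nonneg : ∀ t ≥ (0:ℝ), 0 ≤ α t) (hα_le : ∀ t ≥ (0:ℝ), α t ≤ t)
    (hf_cont : ContinuousOn f (Ici 0)) (hf_nonneg : ∀ s ≥ (0:ℝ), 0 ≤ f s)
    (hg_cont : ContinuousOn g (Ici 0)) (hg_nonneg : ∀ s ≥ (0:ℝ), 0 ≤ g s)
    (hw_cont : ContinuousOn w (Ici 0)) (hw_mono : MonotoneOn w (Ici 0))
    (hw_pos : ∀ x > (0:ℝ), 0 < w x)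
    (hΨ : ∀ x, Ψ x = ∫ s in (1:ℝ)..x, 1 / w (s ^ (1 / (m - n))))
    (hΨ_div : Tendsto Ψ atTop atTop)
    (hmain : ∀ t ≥ (0:ℝ),
      u t ^ m ≤ c ^ (m / (m - n)) + (m / (m - n)) *
        ((∫ s in (0:ℝ)..(α t), f s * u s ^ n * w (u s)) +
          ∫ s in (0:ℝ)..t, g s * u s ^ n * w (u s))) :
    ∀ t ≥ (0:ℝ),
      ∃ y > (0:ℝ),
        Ψ y = Ψ c + (∫ s in (0:ℝ)..(α t), f s) + (∫ s in (0:ℝ)..t, g s) ∧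
        u t ≤ y ^ (1 / (m - n)) := by
  intro t₀ ht₀
  have hk : (0:ℝ) < m - n := sub_pos.2 hmn
  have hm : (0:ℝ) < m := hn.trans hmn
  set K : ℝ := m / (m - n) with hKdef
  have hK : 0 < K := div_pos hm hk
  -- extended (globally continuous) versions of the data
  have hmaxc : Continuous fun s : ℝ => max s 0 := continuous_id.max continuous_const
  have hmem : ∀ s : ℝ, max s 0 ∈ Ici (0:ℝ) := fun s => Set.mem_Ici.2 (le_max_right _ _)
  set uE : ℝ → ℝ := fun s => u (max s 0) with huEdef
  set fE : ℝ → ℝ := fun s => f (max s 0) with hfEdef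
  set gE : ℝ → ℝ := fun s => g (max s 0) with hgEdef
  have hcu : Continuous uE := hu_cont.comp_continuous hmaxc hmem
  have hcf : Continuous fE := hf_cont.comp_continuous hmaxc hmem
  have hcg : Continuous gE := hg_cont.comp_continuous hmaxc hmem
  have huE0 : ∀ s, 0 ≤ uE s := fun s => hu_nonneg _ (hmem s)
  have hfE0 : ∀ s, 0 ≤ fE s := fun s => hf_nonneg _ (hmem s)
  have hgE0 : ∀ s, 0 ≤ gE s := fun s => hg_nonneg _ (hmem s)
  have hcwu : Continuous fun s => w (uE s) := hw_cont.comp_continuous hcu fun s => huE0 s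
  -- w is nonnegative on `Ici 0`
  have hw00 : 0 ≤ w 0 := by
    have h1 : Tendsto w (𝓝[>] (0:ℝ)) (𝓝 (w 0)) :=
      (hw_cont 0 self_mem_Ici).mono Ioi_subset_Ici_self
    exact ge_of_tendsto h1 (eventually_nhdsWithin_of_forall fun x hx => (hw_pos x hx).le)
  have hwnn : ∀ x : ℝ, 0 ≤ x → 0 ≤ w x := by
    intro x hx
    rcases eq_or_lt_of_le hx with h | h
    · rw [← h]; exact hw00
    · exact (hw_pos x h).le
  -- the integrands
  set Hf : ℝ → ℝ := fun s => fE s * uE s ^ n * w (uE s) with hHfdef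
  set Hg : ℝ → ℝ := fun s => gE s * uE s ^ n * w (uE s) with hHgdef
  have hcHf : Continuous Hf := (hcf.mul (hcu.rpow_const fun s => Or.inr hn.le)).mul hcwu
  have hcHg : Continuous Hg := (hcg.mul (hcu.rpow_const fun s => Or.inr hn.le)).mul hcwu
  have hHf0 : ∀ s, 0 ≤ Hf s := fun s =>
    mul_nonneg (mul_nonneg (hfE0 s) (Real.rpow_nonneg (huE0 s) n)) (hwnn _ (huE0 s))
  have hHg0 : ∀ s, 0 ≤ Hg s := fun s =>
    mul_nonneg (mul_nonneg (hgE0 s) (Real.rpow_nonneg (huE0 s) n)) (hwnn _ (huE0 s))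
  -- congruence of integrals for functions agreeing on `Ici 0`
  have hcong : ∀ (F G : ℝ → ℝ), (∀ s, 0 ≤ s → F s = G s) → ∀ x : ℝ, 0 ≤ x →
      (∫ s in (0:ℝ)..x, F s) = ∫ s in (0:ℝ)..x, G s := by
    intro F G h x hx
    apply intervalIntegral.integral_congr
    intro s hs
    rw [uIcc_of_le hx] at hs
    exact h s hs.1
  set v : ℝ → ℝ := fun t =>
    c ^ K + K * ((∫ s in (0:ℝ)..α t, Hf s) + ∫ s in (0:ℝ)..t, Hg s) with hvdef
  have hmain' : ∀ t : ℝ, 0 ≤ t → u t ^ m ≤ v t := by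
    intro t ht
    have h1 := hmain t ht
    have e1 : (∫ s in (0:ℝ)..α t, f s * u s ^ n * w (u s)) = ∫ s in (0:ℝ)..α t, Hf s :=
      hcong _ _ (fun s hs => by simp [hHfdef, hfEdef, huEdef, max_eq_left hs]) _ (hα_nonneg t ht)
    have e2 : (∫ s in (0:ℝ)..t, g s * u s ^ n * w (u s)) = ∫ s in (0:ℝ)..t, Hg s :=
      hcong _ _ (fun s hs => by simp [hHgdef, hgEdef, huEdef, max_eq_left hs]) _ ht
    rw [e1, e2] at h1
    rw [hvdef]
    exact h1
  -- v is monotone, positive, bounded below by c ^ K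
  have hvmono : ∀ ⦃s t : ℝ⦄, 0 ≤ s → s ≤ t → v s ≤ v t := by
    intro s t hs hst
    have h1 : (∫ x in (0:ℝ)..α s, Hf x) ≤ ∫ x in (0:ℝ)..α t, Hf x :=
      aux_primitive_mono hcHf hHf0 (hα_mono hs (hs.trans hst) hst)
    have h2 : (∫ x in (0:ℝ)..s, Hg x) ≤ ∫ x in (0:ℝ)..t, Hg x :=
      aux_primitive_mono hcHg hHg0 hst
    simp only [hvdef]
    nlinarith
  have hvlb : ∀ t : ℝ, 0 ≤ t → c ^ K ≤ v t := by
    intro t ht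
    have h1 : 0 ≤ ∫ s in (0:ℝ)..α t, Hf s :=
      intervalIntegral.integral_nonneg (hα_nonneg t ht) fun x _ => hHf0 x
    have h2 : 0 ≤ ∫ s in (0:ℝ)..t, Hg s :=
      intervalIntegral.integral_nonneg ht fun x _ => hHg0 x
    simp only [hvdef]
    nlinarith
  have hcK : 0 < c ^ K := Real.rpow_pos_of_pos hc K
  have hvpos : ∀ t : ℝ, 0 ≤ t → 0 < v t := fun t ht => lt_of_lt_of_le hcK (hvlb t ht)
  -- u s ≤ (v t) ^ (1/m) for 0 ≤ s ≤ t
  have huv : ∀ t : ℝ, 0 ≤ t → ∀ s : ℝ, 0 ≤ s → s ≤ t → u s ≤ v t ^ (1/m) := by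
    intro t ht s hs hst
    have h1 : u s ^ m ≤ v t := (hmain' s hs).trans (hvmono hs hst)
    have h2 : (u s ^ m) ^ (1/m) ≤ v t ^ (1/m) :=
      Real.rpow_le_rpow (Real.rpow_nonneg (hu_nonneg s hs) m) h1 (one_div_pos.2 hm).le
    rwa [← Real.rpow_mul (hu_nonneg s hs), mul_one_div, div_self hm.ne', Real.rpow_one] at h2
  set z : ℝ → ℝ := fun t => v t ^ ((m - n)/m) with hzdef
  have hKmul : K * ((m - n)/m) = 1 := by
    rw [hKdef]; field_simp
  have hzc : ∀ t : ℝ, 0 ≤ t → c ≤ z t := by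
    intro t ht
    have h1 : (c ^ K) ^ ((m-n)/m) ≤ v t ^ ((m-n)/m) :=
      Real.rpow_le_rpow hcK.le (hvlb t ht) (div_nonneg hk.le hm.le)
    rw [hzdef]
    rwa [← Real.rpow_mul hc.le, hKmul, Real.rpow_one] at h1
  have hzpos : ∀ t : ℝ, 0 ≤ t → 0 < z t := fun t ht => hc.trans_le (hzc t ht)
  have hzv : ∀ t : ℝ, 0 ≤ t → z t ^ (1/(m-n)) = v t ^ (1/m) := by
    intro t ht
    simp only [hzdef]
    rw [← Real.rpow_mul (hvpos t ht).le]
    congr 1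
    field_simp
  -- the function Φ (integrand of Ψ) and properties of Ψ
  set Φ : ℝ → ℝ := fun s => 1 / w (s ^ (1/(m-n))) with hΦdef
  have hΨfun : Ψ = fun x => ∫ s in (1:ℝ)..x, Φ s := by
    funext x
    rw [hΨ x, hΦdef]
  have hΦcont : ContinuousOn Φ (Ioi 0) := by
    rw [hΦdef]
    intro s hs
    have hs' : (0:ℝ) < s := hs
    have h1 : ContinuousWithinAt (fun s : ℝ => s ^ (1/(m-n))) (Ioi 0) s :=
      (Real.continuousAt_rpow_const s _ (Or.inr (one_div_pos.2 hk).le)).continuousWithinAt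
    have h2 : ContinuousWithinAt (fun s : ℝ => w (s ^ (1/(m-n)))) (Ioi 0) s :=
      ContinuousWithinAt.comp (hw_cont (s ^ (1/(m-n))) (Real.rpow_nonneg hs'.le _)) h1
        (fun x hx => Real.rpow_nonneg (le_of_lt hx) _)
    exact continuousWithinAt_const.div h2
      (ne_of_gt (hw_pos _ (Real.rpow_pos_of_pos hs' _)))
  have hΦpos : ∀ s : ℝ, 0 < s → 0 < Φ s := by
    intro s hs
    rw [hΦdef]
    exact one_div_pos.2 (hw_pos _ (Real.rpow_pos_of_pos hs _))
  have hΦint : ∀ a b : ℝ, 0 < a → 0 < b → IntervalIntegrable Φ MeasureTheory.volume a b := by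
    intro a b ha hb
    apply ContinuousOn.intervalIntegrable
    apply hΦcont.mono
    intro x hx
    exact lt_of_lt_of_le (lt_min ha hb) hx.1
  have hΨd : ∀ x : ℝ, 0 < x → HasDerivAt Ψ (Φ x) x := by
    intro x hx
    rw [hΨfun]
    exact intervalIntegral.integral_hasDerivAt_right (hΦint 1 x one_pos hx)
      (hΦcont.stronglyMeasurableAtFilter isOpen_Ioi x hx)
      (hΦcont.continuousAt (Ioi_mem_nhds hx))
  have hΨmono : ∀ a b : ℝ, 0 < a → a < b → Ψ a < Ψ b := by
    intro a b ha hab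
    have hb : 0 < b := ha.trans hab
    have h1 : Ψ a + (∫ s in a..b, Φ s) = Ψ b := by
      rw [hΨfun]
      exact intervalIntegral.integral_add_adjacent_intervals (hΦint 1 a one_pos ha)
        (hΦint a b ha hb)
    have h2 : 0 < ∫ s in a..b, Φ s :=
      intervalIntegral.intervalIntegral_pos_of_pos_on (hΦint a b ha hb)
        (fun x hx => hΦpos x (ha.trans hx.1)) hab
    linarith
  -- derivatives
  have hα_diff : DifferentiableOn ℝ α (Ici 0) := hα_C1.differentiableOn one_ne_zero
  have hαd : ∀ t : ℝ, 0 < t → HasDerivAt α (derivWithin α (Ici 0) t) t := by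
    intro t ht
    exact ((hα_diff t ht.le).hasDerivWithinAt).hasDerivAt (Ici_mem_nhds ht)
  have hαd0 : ∀ t : ℝ, 0 < t → 0 ≤ derivWithin α (Ici 0) t := fun t ht =>
    aux_deriv_nonneg_of_monotoneOn hα_mono ht (hαd t ht)
  have hvd : ∀ t : ℝ, 0 < t → HasDerivAt v
      (K * (Hf (α t) * derivWithin α (Ici 0) t + Hg t)) t := by
    intro t ht
    rw [hvdef]
    have h1 : HasDerivAt (fun x => ∫ s in (0:ℝ)..x, Hf s) (Hf (α t)) (α t) :=
      (hcHf.integral_hasStrictDerivAt 0 (α t)).hasDerivAt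
    have h2 : HasDerivAt (fun t => ∫ s in (0:ℝ)..α t, Hf s)
        (Hf (α t) * derivWithin α (Ici 0) t) t := h1.comp t (hαd t ht)
    have h3 : HasDerivAt (fun x => ∫ s in (0:ℝ)..x, Hg s) (Hg t) t :=
      (hcHg.integral_hasStrictDerivAt 0 t).hasDerivAt
    exact ((h2.add h3).const_mul K).const_add (c ^ K)
  have hzd : ∀ t : ℝ, 0 < t → HasDerivAt z
      ((K * (Hf (α t) * derivWithin α (Ici 0) t + Hg t)) * ((m-n)/m) *
        v t ^ ((m-n)/m - 1)) t := by
    intro t ht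
    rw [hzdef]
    exact (hvd t ht).rpow_const (Or.inl (hvpos t ht.le).ne')
  -- the comparison function P
  set P : ℝ → ℝ := fun t =>
    Ψ (z t) - (∫ s in (0:ℝ)..α t, fE s) - ∫ s in (0:ℝ)..t, gE s with hPdef
  have hPd : ∀ t : ℝ, 0 < t → HasDerivAt P
      (Φ (z t) * ((K * (Hf (α t) * derivWithin α (Ici 0) t + Hg t)) * ((m-n)/m) *
        v t ^ ((m-n)/m - 1)) - fE (α t) * derivWithin α (Ici 0) t - gE t) t := by
    intro t ht
    rw [hPdef]
    have h1 : HasDerivAt (fun t => Ψ (z t))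
        (Φ (z t) * ((K * (Hf (α t) * derivWithin α (Ici 0) t + Hg t)) * ((m-n)/m) *
          v t ^ ((m-n)/m - 1))) t :=
      (hΨd (z t) (hzpos t ht.le)).comp t (hzd t ht)
    have h2 : HasDerivAt (fun t => ∫ s in (0:ℝ)..α t, fE s)
        (fE (α t) * derivWithin α (Ici 0) t) t :=
      ((hcf.integral_hasStrictDerivAt 0 (α t)).hasDerivAt).comp t (hαd t ht)
    have h3 : HasDerivAt (fun t => ∫ s in (0:ℝ)..t, gE s) (gE t) t :=
      (hcg.integral_hasStrictDerivAt 0 t).hasDerivAt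
    exact (h1.sub h2).sub h3
  -- the derivative of P is nonpositive
  have hP'le : ∀ t : ℝ, 0 < t →
      Φ (z t) * ((K * (Hf (α t) * derivWithin α (Ici 0) t + Hg t)) * ((m-n)/m) *
        v t ^ ((m-n)/m - 1)) - fE (α t) * derivWithin α (Ici 0) t - gE t ≤ 0 := by
    intro t ht
    set a' := derivWithin α (Ici 0) t with ha'def
    have ha'0 : 0 ≤ a' := hαd0 t ht
    set R : ℝ := v t ^ (1/m) with hRdef
    have hRpos : 0 < R := Real.rpow_pos_of_pos (hvpos t ht.le) _
    set Q : ℝ := v t ^ (n/m) with hQdef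
    have hQpos : 0 < Q := Real.rpow_pos_of_pos (hvpos t ht.le) _
    have hwR : 0 < w R := hw_pos R hRpos
    have e1 : Φ (z t) = 1 / w R := by
      simp only [hΦdef, hRdef]
      rw [hzv t ht.le]
    have e2 : v t ^ ((m-n)/m - 1) = Q⁻¹ := by
      rw [hQdef, ← Real.rpow_neg (hvpos t ht.le).le]
      congr 1
      field_simp
      ring
    have hαt0 : 0 ≤ α t := hα_nonneg t ht.le
    have huR : ∀ s : ℝ, 0 ≤ s → s ≤ t → uE s ≤ R := by
      intro s hs hst
      have h0 : uE s = u s := by simp [huEdef, max_eq_left hs]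
      rw [h0, hRdef]
      exact huv t ht.le s hs hst
    have hpow : ∀ s : ℝ, 0 ≤ s → s ≤ t → uE s ^ n ≤ Q := by
      intro s hs hst
      have h1 : uE s ^ n ≤ R ^ n := Real.rpow_le_rpow (huE0 s) (huR s hs hst) hn.le
      have h2 : R ^ n = Q := by
        rw [hRdef, hQdef, ← Real.rpow_mul (hvpos t ht.le).le]
        congr 1
        field_simp
      rwa [h2] at h1
    have hwle : ∀ s : ℝ, 0 ≤ s → s ≤ t → w (uE s) ≤ w R := by
      intro s hs hst
      exact hw_mono (huE0 s) hRpos.le (huR s hs hst)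
    have hHfb : Hf (α t) ≤ fE (α t) * (Q * w R) := by
      have h1 := hpow (α t) hαt0 (hα_le t ht.le)
      have h2 := hwle (α t) hαt0 (hα_le t ht.le)
      have h4 := hfE0 (α t)
      have h5 := hwnn _ (huE0 (α t))
      have h6 := Real.rpow_nonneg (huE0 (α t)) n
      rw [hHfdef]
      simp only
      nlinarith [mul_nonneg (mul_nonneg h4 h6) (sub_nonneg.2 h2),
        mul_nonneg (mul_nonneg h4 hwR.le) (sub_nonneg.2 h1)]
    have hHgb : Hg t ≤ gE t * (Q * w R) := by
      have h1 := hpow t ht.le le_rfl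
      have h2 := hwle t ht.le le_rfl
      have h4 := hgE0 t
      have h5 := hwnn _ (huE0 t)
      have h6 := Real.rpow_nonneg (huE0 t) n
      rw [hHgdef]
      simp only
      nlinarith [mul_nonneg (mul_nonneg h4 h6) (sub_nonneg.2 h2),
        mul_nonneg (mul_nonneg h4 hwR.le) (sub_nonneg.2 h1)]
    have hS : Hf (α t) * a' + Hg t ≤ (fE (α t) * a' + gE t) * (Q * w R) := by
      have h1 : Hf (α t) * a' ≤ fE (α t) * (Q * w R) * a' :=
        mul_le_mul_of_nonneg_right hHfb ha'0
      have h2 : (fE (α t) * a' + gE t) * (Q * w R)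
          = fE (α t) * (Q * w R) * a' + gE t * (Q * w R) := by ring
      linarith
    rw [e1, e2]
    have h0 : K * (Hf (α t) * a' + Hg t) * ((m-n)/m) = Hf (α t) * a' + Hg t := by
      rw [mul_comm K (Hf (α t) * a' + Hg t), mul_assoc, hKmul, mul_one]
    rw [h0]
    have hrw : 1 / w R * ((Hf (α t) * a' + Hg t) * Q⁻¹)
        = (Hf (α t) * a' + Hg t) / (Q * w R) := by
      rw [one_div, div_eq_mul_inv, mul_inv]
      ring
    rw [hrw]
    have hle : (Hf (α t) * a' + Hg t) / (Q * w R) ≤ fE (α t) * a' + gE t := by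
      rw [div_le_iff₀ (mul_pos hQpos hwR)]
      exact hS
    linarith
  -- P is antitone on Ici 0
  have hPcont : ContinuousOn P (Ici 0) := by
    rw [hPdef]
    have hαc : ContinuousOn α (Ici 0) := hα_C1.continuousOn
    have hprimHf : Continuous fun x : ℝ => ∫ s in (0:ℝ)..x, Hf s :=
      intervalIntegral.continuous_primitive (fun a b => hcHf.intervalIntegrable a b) 0
    have hprimHg : Continuous fun x : ℝ => ∫ s in (0:ℝ)..x, Hg s :=
      intervalIntegral.continuous_primitive (fun a b => hcHg.intervalIntegrable a b) 0
    have hprimf : Continuous fun x : ℝ => ∫ s in (0:ℝ)..x, fE s :=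
      intervalIntegral.continuous_primitive (fun a b => hcf.intervalIntegrable a b) 0
    have hprimg : Continuous fun x : ℝ => ∫ s in (0:ℝ)..x, gE s :=
      intervalIntegral.continuous_primitive (fun a b => hcg.intervalIntegrable a b) 0
    have hvcont : ContinuousOn v (Ici 0) := by
      rw [hvdef]
      exact continuousOn_const.add (continuousOn_const.mul
        ((hprimHf.comp_continuousOn hαc).add hprimHg.continuousOn))
    have hzcont : ContinuousOn z (Ici 0) := by
      rw [hzdef]
      exact hvcont.rpow_const (fun x hx => Or.inr (div_nonneg hk.le hm.le))
    have h1 : ContinuousOn (fun t => Ψ (z t)) (Ici 0) := fun t ht =>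
      ((hΨd (z t) (hzpos t ht)).continuousAt).comp_continuousWithinAt (hzcont t ht)
    exact (h1.sub (hprimf.comp_continuousOn hαc)).sub hprimg.continuousOn
  have hPanti : AntitoneOn P (Ici 0) := by
    apply antitoneOn_of_deriv_nonpos (convex_Ici 0) hPcont
    · intro x hx
      rw [interior_Ici] at hx
      exact ((hPd x hx).differentiableAt).differentiableWithinAt
    · intro x hx
      rw [interior_Ici] at hx
      rw [(hPd x hx).deriv]
      exact hP'le x hx
  -- values at 0
  have hα0 : α 0 = 0 := le_antisymm (hα_le 0 le_rfl) (hα_nonneg 0 le_rfl)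
  have hv0 : v 0 = c ^ K := by
    rw [hvdef]
    simp [hα0]
  have hz0 : z 0 = c := by
    rw [hzdef]
    simp only
    rw [hv0, ← Real.rpow_mul hc.le, hKmul, Real.rpow_one]
  have hP0 : P 0 = Ψ c := by
    rw [hPdef]
    simp only
    rw [hz0, hα0]
    simp
  -- key estimate at t₀
  have h1 := hPanti self_mem_Ici ht₀ ht₀
  rw [hP0] at h1
  simp only [hPdef] at h1
  have hkey : Ψ (z t₀) ≤ Ψ c + (∫ s in (0:ℝ)..α t₀, fE s) + ∫ s in (0:ℝ)..t₀, gE s := by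
    linarith
  -- choose y by the intermediate value theorem
  have hFf0 : 0 ≤ ∫ s in (0:ℝ)..α t₀, fE s :=
    intervalIntegral.integral_nonneg (hα_nonneg t₀ ht₀) fun x _ => hfE0 x
  have hGg0 : 0 ≤ ∫ s in (0:ℝ)..t₀, gE s :=
    intervalIntegral.integral_nonneg ht₀ fun x _ => hgE0 x
  obtain ⟨M, hM1, hM2⟩ :=
    ((hΨ_div.eventually_ge_atTop
      (Ψ c + (∫ s in (0:ℝ)..α t₀, fE s) + ∫ s in (0:ℝ)..t₀, gE s)).and
      (eventually_ge_atTop c)).exists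
  have hΨcont : ContinuousOn Ψ (Icc c M) := fun x hx =>
    ((hΨd x (lt_of_lt_of_le hc hx.1)).continuousAt).continuousWithinAt
  have hT0mem : (Ψ c + (∫ s in (0:ℝ)..α t₀, fE s) + ∫ s in (0:ℝ)..t₀, gE s)
      ∈ Icc (Ψ c) (Ψ M) := ⟨by linarith, hM1⟩
  obtain ⟨y, hyIcc, hyval⟩ := intermediate_value_Icc hM2 hΨcont hT0mem
  have hy0 : 0 < y := lt_of_lt_of_le hc hyIcc.1
  have hzy : z t₀ ≤ y := by
    by_contra hcon
    push_neg at hcon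
    have h3 := hΨmono y (z t₀) hy0 hcon
    rw [hyval] at h3
    linarith
  refine ⟨y, hy0, ?_, ?_⟩
  · rw [hyval]
    have e1 : (∫ s in (0:ℝ)..α t₀, fE s) = ∫ s in (0:ℝ)..α t₀, f s :=
      hcong _ _ (fun s hs => by simp [hfEdef, max_eq_left hs]) _ (hα_nonneg t₀ ht₀)
    have e2 : (∫ s in (0:ℝ)..t₀, gE s) = ∫ s in (0:ℝ)..t₀, g s :=
      hcong _ _ (fun s hs => by simp [hgEdef, max_eq_left hs]) _ ht₀
    rw [e1, e2]
  · have h4 : u t₀ ≤ v t₀ ^ (1/m) := huv t₀ ht₀ t₀ ht₀ le_rfl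
    rw [← hzv t₀ ht₀] at h4
    have h5 : z t₀ ^ (1/(m-n)) ≤ y ^ (1/(m-n)) :=
      Real.rpow_le_rpow (hzpos t₀ ht₀).le hzy (one_div_pos.2 hk).le
    exact h4.trans h5
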